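/- arXiv:2511.08210 — 2 statements merged into one kernel-verified Lean document; each statement's English description precedes it below -/
import Mathlib

section
/- Let T be an alternating base tree and t a vertex with dist^β(t) < ∞. Then there exists a minimum-level incoming edge e* of T(t) with e* ∉ EP(t). -/
open SimpleGraph
open scoped Classical

variable {V : Type*} [Fintype V] [DecidableEq V]

/-- A matching system `(G, M)` in which a super free vertex `f` has been added:
`U` is the set of free vertices of the original system, and for each `u ∈ U`
the vertex `mid u` forms the length-two alternating path `f - mid u - u`
(with `{f, mid u} ∉ M` and `{mid u, u} ∈ M`).  After the addition, `f` is the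
unique free vertex. -/
structure Sys (V : Type*) [Fintype V] [DecidableEq V] where
  G : SimpleGraph V
  M : Set (Sym2 V)
  f : V
  U : Set V
  mid : V → V
  M_sub : M ⊆ G.edgeSet
  matching : ∀ v : V, ∀ e₁ ∈ M, ∀ e₂ ∈ M, v ∈ e₁ → v ∈ e₂ → e₁ = e₂
  f_free : ∀ e ∈ M, f ∉ e
  others_matched : ∀ v : V, v ≠ f → ∃ e ∈ M, v ∈ e
  U_spec : ∀ u ∈ U, G.Adj f (mid u) ∧ s(f, mid u) ∉ M ∧ G.Adj (mid u) u ∧ s(mid u, u) ∈ M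
  mid_deg : ∀ u ∈ U, ∀ w : V, G.Adj (mid u) w → w = f ∨ w = u
  f_adj : ∀ w : V, G.Adj f w → ∃ u ∈ U, w = mid u
  mid_inj : ∀ u ∈ U, ∀ u' ∈ U, mid u = mid u' → u = u'

namespace Sys

variable (S : Sys V)

/-- An alternating path of the matching system: a simple path whose consecutive
edges alternate membership in `M`. -/
def IsAltPath {a b : V} (p : S.G.Walk a b) : Prop :=
  p.IsPath ∧ List.Chain' (fun e₁ e₂ => (e₁ ∈ S.M ↔ e₂ ∉ S.M)) p.edges

/-- `adist S θ u` is the length of a shortest alternating path from `f` to `u`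
whose length has parity `θ` (`true` = odd, `false` = even); `⊤` if none exists. -/
noncomputable def adist (θ : Bool) (u : V) : ℕ∞ :=
  sInf {n : ℕ∞ | ∃ p : S.G.Walk S.f u,
    S.IsAltPath p ∧ (p.length : ℕ∞) = n ∧ (Odd p.length ↔ θ = true)}

/-- The orthodox parity `α(u)` of `u`: the parity with smaller alternating distance. -/
noncomputable def op (u : V) : Bool :=
  if S.adist true u < S.adist false u then true else false

/-- The orthodox distance `dist^α(u)`. -/
noncomputable def distOrth (u : V) : ℕ∞ := S.adist (S.op u) u

/-- The unorthodox distance `dist^β(u)`. -/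
noncomputable def distUnorth (u : V) : ℕ∞ := S.adist (!S.op u) u

/-- `ρ(e)`: `true` (= odd) iff `e` is a matching edge. -/
noncomputable def rho (e : Sym2 V) : Bool := if e ∈ S.M then true else false

/-- `EP(u)`: the set of edges `e` incident to `u` such that some shortest orthodox
alternating path from `f` to `u` terminates with `e`. -/
def EP (u : V) : Set (Sym2 V) :=
  {e | ∃ p : S.G.Walk S.f u, S.IsAltPath p ∧ (p.length : ℕ∞) = S.distOrth u ∧
        p.edges.getLast? = some e}

/-- `P(u)`: the set of immediate predecessors of `u` on shortest orthodox
alternating paths. -/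
def Pset (u : V) : Set V := {u' | s(u', u) ∈ S.EP u}

/-- `EP = ⋃_u EP(u)`. -/
def EPall : Set (Sym2 V) := ⋃ u : V, S.EP u

/-- The volume `vlevel(e) = dist^{ρ(e)}(y) + dist^{ρ(e)}(z) + 1` of an edge `e = {y,z}`. -/
noncomputable def vlevel (e : Sym2 V) : ℕ∞ :=
  Sym2.lift ⟨fun y z => S.adist (S.rho e) y + S.adist (S.rho e) z + 1,
    fun y z => by ring⟩ e

/-- The height `hlevel(e) = max (dist^{ρ(e)}(y)) (dist^{ρ(e)}(z))` of an edge `e = {y,z}`. -/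
noncomputable def hlevel (e : Sym2 V) : ℕ∞ :=
  Sym2.lift ⟨fun y z => max (S.adist (S.rho e) y) (S.adist (S.rho e) z),
    fun y z => max_comm _ _⟩ e

/-- The level `level(e) = n' · vlevel(e) + hlevel(e)` with `n' = |V| + 1 > |V|`,
giving the lexicographic order on (volume, height). -/
noncomputable def level (e : Sym2 V) : ℕ∞ :=
  ((Fintype.card V + 1 : ℕ) : ℕ∞) * S.vlevel e + S.hlevel e

/-- An augmenting path: an alternating path connecting two distinct vertices of `U`,
starting and ending with non-matching edges. -/
def IsAugPath {a b : V} (p : S.G.Walk a b) : Prop :=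
  S.IsAltPath p ∧ a ∈ S.U ∧ b ∈ S.U ∧ a ≠ b ∧
  (∀ e, p.edges.head? = some e → e ∉ S.M) ∧ (∀ e, p.edges.getLast? = some e → e ∉ S.M)

/-- The length of shortest augmenting paths of the system is `L`. -/
def ShortestAugLen (L : ℕ) : Prop :=
  (∃ a b : V, ∃ p : S.G.Walk a b, S.IsAugPath p ∧ p.length = L) ∧
  (∀ a b : V, ∀ p : S.G.Walk a b, S.IsAugPath p → L ≤ p.length)

/-- Vertices of the alternating base DAG `H`: all vertices except `f` and its neighbors. -/
def inH (v : V) : Prop := v ≠ S.f ∧ ¬ S.G.Adj S.f v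

/-- The edge relation of the alternating base DAG `H`: an edge from `u` to `v`
iff `v ∈ P(u)` (upward orientation); vertices of `U` are sinks. -/
def HStep (u v : V) : Prop := S.inH u ∧ S.inH v ∧ u ∉ S.U ∧ v ∈ S.Pset u

end Sys

/-- An alternating base tree of `S`: every non-root vertex has its parent chosen
from `P(u)`; the root is the super free vertex `f`. -/
structure ABT (S : Sys V) where
  par : V → V
  par_f : par S.f = S.f
  par_mem : ∀ u : V, u ≠ S.f → par u ∈ S.Pset u

namespace ABT

variable {S : Sys V} (T : ABT S)

/-- `v` belongs to the subtree `T(t)` rooted at `t`. -/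
def inSub (t v : V) : Prop := ∃ n : ℕ, T.par^[n] v = t

/-- `e` is a tree edge of `T`. -/
def IsTreeEdge (e : Sym2 V) : Prop := ∃ u : V, u ≠ S.f ∧ e = s(u, T.par u)

/-- `e` is an incoming edge of the subtree `T(t)`: a non-tree edge of `G` with
exactly one endpoint inside `T(t)`. -/
def Incoming (t : V) (e : Sym2 V) : Prop :=
  e ∈ S.G.edgeSet ∧ ¬ T.IsTreeEdge e ∧
  ∃ y z : V, e = s(y, z) ∧ T.inSub t z ∧ ¬ T.inSub t y

/-- `e` is a minimum-level incoming edge (MIE) of `T(t)`. -/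
def IsMIE (t : V) (e : Sym2 V) : Prop :=
  T.Incoming t e ∧ ∀ e', T.Incoming t e' → S.level e ≤ S.level e'

/-- `e` is a minimum-volume incoming edge of `T(t)`. -/
def IsMinVolIncoming (t : V) (e : Sym2 V) : Prop :=
  T.Incoming t e ∧ ∀ e', T.Incoming t e' → S.vlevel e ≤ S.vlevel e'

/-- The level of a path w.r.t. `T`: the maximum level of its non-tree edges
(`0` if it contains none). -/
noncomputable def pathLevel {a b : V} (p : S.G.Walk a b) : ℕ∞ :=
  sSup {x : ℕ∞ | ∃ e ∈ p.edges, ¬ T.IsTreeEdge e ∧ x = S.level e}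

/-- The volume of a path w.r.t. `T`: the maximum volume of its non-tree edges
(`0` if it contains none). -/
noncomputable def pathVlevel {a b : V} (p : S.G.Walk a b) : ℕ∞ :=
  sSup {x : ℕ∞ | ∃ e ∈ p.edges, ¬ T.IsTreeEdge e ∧ x = S.vlevel e}

end ABT

/-- An edge is crossable if its volume is `2ℓ+5` and some alternating base tree
puts its endpoints into subtrees rooted at two distinct free vertices. -/
def Sys.Crossable (S : Sys V) (ℓ : ℕ) (e : Sym2 V) : Prop :=
  S.vlevel e = ((2 * ℓ + 5 : ℕ) : ℕ∞) ∧
  ∃ T : ABT S, ∃ y z : V, e = s(y, z) ∧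
    ∃ uy ∈ S.U, ∃ uz ∈ S.U, uy ≠ uz ∧ T.inSub uy y ∧ T.inSub uz z

/-- `E*`: the set of crossable critical edges (crossable and not in `EP`). -/
def Sys.Estar (S : Sys V) (ℓ : ℕ) : Set (Sym2 V) :=
  {e | S.Crossable ℓ e ∧ e ∉ S.EPall}

/-- A (directed) path in the alternating base DAG `H`. -/
structure HPath (S : Sys V) where
  verts : List V
  ne : verts ≠ []
  chain : verts.Chain' S.HStep
  mem : ∀ v ∈ verts, S.inH v
  nodup : verts.Nodup

/-- The first vertex of an `H`-path. -/
def HPath.first {S : Sys V} (P : HPath S) : V := P.verts.head P.ne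

/-- The last vertex of an `H`-path. -/
def HPath.last {S : Sys V} (P : HPath S) : V := P.verts.getLast P.ne

/-- A double path `(P, Q, y, z)`: `{y,z} ∈ E*` and `P`, `Q` are vertex-disjoint
paths of `H` from `y` and `z` terminating at two distinct free vertices. -/
structure DoublePath (S : Sys V) (ℓ : ℕ) where
  P : HPath S
  Q : HPath S
  y : V
  z : V
  hy : P.first = y
  hz : Q.first = z
  he : s(y, z) ∈ S.Estar ℓ
  hPU : P.last ∈ S.U
  hQU : Q.last ∈ S.U
  hne : P.last ≠ Q.last
  hdisj : ∀ v ∈ P.verts, v ∉ Q.verts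

/-- `T` respects an `H`-path `P` if consecutive vertices of `P` are
child–parent pairs of `T`. -/
def ABT.RespectsPath {S : Sys V} (T : ABT S) (P : HPath S) : Prop :=
  P.verts.Chain' (fun u v => T.par u = v)

/-- `T` respects a double path if it respects both of its constituent paths. -/
def ABT.RespectsDP {S : Sys V} {ℓ : ℕ} (T : ABT S) (D : DoublePath S ℓ) : Prop :=
  T.RespectsPath D.P ∧ T.RespectsPath D.Q

/-- An in-tree of `H` rooted at a free vertex: every non-root vertex has a unique
outgoing `H`-edge inside the tree and all vertices reach the root.  (Paths ending
at a free vertex are a special case.) -/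
structure InTree (S : Sys V) where
  W : Set V
  root : V
  g : V → V
  root_W : root ∈ W
  root_U : root ∈ S.U
  step : ∀ v ∈ W, v ≠ root → S.HStep v (g v) ∧ g v ∈ W
  reach : ∀ v ∈ W, ∃ n : ℕ, g^[n] v = root


section AuxStmt7

open SimpleGraph List

private lemma enat_sInf_mem {s : Set ℕ∞} (h : s.Nonempty) : sInf s ∈ s := by
  by_cases hn : ∃ n : ℕ, (n : ℕ∞) ∈ s
  · obtain ⟨n, hn'⟩ := hn
    have hT : {m : ℕ | (m : ℕ∞) ∈ s}.Nonempty := ⟨n, hn'⟩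
    have heq : sInf s = ((sInf {m : ℕ | (m : ℕ∞) ∈ s} : ℕ) : ℕ∞) := by
      apply _root_.le_antisymm
      · exact sInf_le (Nat.sInf_mem hT)
      · apply le_sInf
        intro x hx
        cases x using ENat.recTopCoe with
        | top => exact le_top
        | coe m => exact_mod_cast Nat.sInf_le hx
    rw [heq]
    exact Nat.sInf_mem hT
  · obtain ⟨x, hx⟩ := h
    have hx' : x = ⊤ := by
      cases x using ENat.recTopCoe with
      | top => rfl
      | coe m => exact absurd ⟨m, hx⟩ hn
    have : sInf s = ⊤ := by
      apply _root_.le_antisymm le_top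
      apply le_sInf
      intro y hy
      cases y using ENat.recTopCoe with
      | top => exact le_refl _
      | coe m => exact absurd ⟨m, hy⟩ hn
    rw [this, ← hx']
    exact hx

private lemma listStatus {V : Type*} {M : Set (Sym2 V)} (l₁ : List (Sym2 V)) :
    ∀ (P : Prop) (e : Sym2 V) (l₂ : List (Sym2 V)),
      List.Chain' (fun e₁ e₂ => (e₁ ∈ M ↔ e₂ ∉ M)) (l₁ ++ e :: l₂) →
      (∀ e' ∈ (l₁ ++ e :: l₂).head?, (e' ∈ M ↔ P)) →
      (e ∈ M ↔ (P ↔ Even l₁.length)) := by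
  induction l₁ with
  | nil =>
    intro P e l₂ _ hh
    have h0 := hh e (by simp)
    have : Even ([] : List (Sym2 V)).length := by simp
    tauto
  | cons a l ih =>
    intro P e l₂ hc hh
    have ha : a ∈ M ↔ P := hh a (by simp)
    rw [List.cons_append, List.Chain', List.isChain_cons] at hc
    obtain ⟨hR, hc'⟩ := hc
    have hh' : ∀ e' ∈ (l ++ e :: l₂).head?, (e' ∈ M ↔ ¬P) := by
      intro e' he'
      have := hR e' he'
      tauto
    have hkey := ih (¬P) e l₂ hc' hh'
    have hpar : Even ((a :: l).length) ↔ ¬ Even l.length := by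
      simp [List.length_cons, Nat.even_add_one]
    by_cases hE : Even l.length <;> by_cases hP : P <;> simp_all <;> tauto

private lemma head_edge_mem {V : Type*} {G : SimpleGraph V} {a b : V} (p : G.Walk a b) :
    ∀ e ∈ p.edges.head?, a ∈ e := by
  cases p with
  | nil => simp
  | cons h q =>
    intro e he
    rw [Walk.edges_cons] at he
    simp only [List.head?_cons, Option.mem_def, Option.some.injEq] at he
    subst he
    simp

private lemma walk_exists_concat {V : Type*} {G : SimpleGraph V} {a b : V} :
    ∀ (p : G.Walk a b), p.edges ≠ [] →
      ∃ (w : V) (h : G.Adj w b) (p' : G.Walk a w), p = p'.concat h := by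
  intro p
  induction p with
  | nil => intro h; simp at h
  | cons h q ih =>
    intro _
    cases q with
    | nil => exact ⟨_, h, Walk.nil, (Walk.concat_nil h).symm⟩
    | cons h' q' =>
      obtain ⟨w, hw, p', hp'⟩ := ih (by simp)
      exact ⟨w, hw, Walk.cons h p', by rw [hp', Walk.concat_cons]⟩

private lemma walk_endpoints_eq_of_length_zero {V : Type*} {G : SimpleGraph V} {a b : V}
    (p : G.Walk a b) (h : p.length = 0) : a = b := by
  cases p with
  | nil => rfl
  | cons h' q => simp [Walk.length_cons] at h

end AuxStmt7

section AuxStmt7b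

open SimpleGraph List

variable {V : Type*} [Fintype V] [DecidableEq V]

private lemma rho_eq_true (S : Sys V) (e : Sym2 V) : S.rho e = true ↔ e ∈ S.M := by
  by_cases h : e ∈ S.M <;> simp [Sys.rho, h]

private lemma edge_status (S : Sys V) {u : V} (p : S.G.Walk S.f u)
    (hp : S.IsAltPath p) {l₁ l₂ : List (Sym2 V)} {e : Sym2 V}
    (hsplit : p.edges = l₁ ++ e :: l₂) :
    (e ∈ S.M ↔ Odd l₁.length) := by
  have hh : ∀ e' ∈ (l₁ ++ e :: l₂).head?, (e' ∈ S.M ↔ False) := by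
    intro e' he'
    rw [← hsplit] at he'
    have hf := head_edge_mem p e' he'
    simp only [iff_false]
    exact fun hm => S.f_free e' hm hf
  have hc := hp.2
  rw [hsplit] at hc
  have hkey := listStatus l₁ False e l₂ hc hh
  rw [hkey]
  rcases Nat.even_or_odd l₁.length with hpar | hpar
  · simp [hpar]
  · simp [hpar, Nat.not_even_iff_odd.mpr hpar]

private lemma adist_le (S : Sys V) {u : V} (b : Bool) (p : S.G.Walk S.f u)
    (hp : S.IsAltPath p) (hpar : Odd p.length ↔ b = true) :
    S.adist b u ≤ (p.length : ℕ∞) :=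
  sInf_le ⟨p, hp, rfl, hpar⟩

private lemma adist_realize (S : Sys V) {u : V} {b : Bool} (h : S.adist b u ≠ ⊤) :
    ∃ p : S.G.Walk S.f u, S.IsAltPath p ∧ (p.length : ℕ∞) = S.adist b u ∧
      (Odd p.length ↔ b = true) := by
  have hne : {n : ℕ∞ | ∃ p : S.G.Walk S.f u,
      S.IsAltPath p ∧ (p.length : ℕ∞) = n ∧ (Odd p.length ↔ b = true)}.Nonempty := by
    by_contra hcon
    rw [Set.not_nonempty_iff_eq_empty] at hcon
    have : S.adist b u = ⊤ := by rw [Sys.adist, hcon]; simp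
    exact h this
  have hmem := enat_sInf_mem hne
  obtain ⟨p, h1, h2, h3⟩ := hmem
  exact ⟨p, h1, by rw [h2]; rfl, h3⟩

private lemma distOrth_le_adist (S : Sys V) (u : V) (b : Bool) :
    S.distOrth u ≤ S.adist b u := by
  rw [Sys.distOrth, Sys.op]
  by_cases h : S.adist true u < S.adist false u
  · rw [if_pos h]
    cases b
    · exact le_of_lt h
    · exact le_refl _
  · rw [if_neg h]
    cases b
    · exact le_refl _
    · exact le_of_not_gt h

private lemma distOrth_le_length (S : Sys V) {u : V} (p : S.G.Walk S.f u)
    (hp : S.IsAltPath p) : S.distOrth u ≤ (p.length : ℕ∞) :=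
  le_trans (distOrth_le_adist S u (decide (Odd p.length)))
    (adist_le S _ p hp (by simp))

private lemma isAltPath_takeUntil (S : Sys V) {u w : V} (p : S.G.Walk S.f u)
    (hp : S.IsAltPath p) (hw : w ∈ p.support) :
    S.IsAltPath (p.takeUntil w hw) := by
  refine ⟨hp.1.takeUntil hw, ?_⟩
  have hspec := p.take_spec hw
  have hedges : p.edges = (p.takeUntil w hw).edges ++ (p.dropUntil w hw).edges := by
    rw [← Walk.edges_append, hspec]
  have hc := hp.2
  rw [hedges, List.Chain', List.isChain_append] at hc
  exact hc.1

private lemma last_edge_status (S : Sys V) {u : V} (p : S.G.Walk S.f u) (hp : S.IsAltPath p)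
    {e : Sym2 V} (he : p.edges.getLast? = some e) :
    u ∈ e ∧ (e ∈ S.M ↔ Even p.length) ∧
      ∃ (w : V) (h : S.G.Adj w u) (p' : S.G.Walk S.f w),
        p = p'.concat h ∧ e = s(w, u) ∧ S.IsAltPath p' ∧ p.length = p'.length + 1 := by
  have hne : p.edges ≠ [] := by
    intro h0
    rw [h0] at he
    simp at he
  obtain ⟨w, h, p', rfl⟩ := walk_exists_concat p hne
  have hedges : (p'.concat h).edges = p'.edges ++ [s(w, u)] := by
    rw [Walk.edges_concat, List.concat_eq_append]
  have he' : e = s(w, u) := by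
    rw [hedges, List.getLast?_append_cons, List.getLast?_singleton] at he
    exact (Option.some.injEq _ _ ▸ he).symm
  subst he'
  have hstat : s(w, u) ∈ S.M ↔ Odd p'.edges.length := by
    refine edge_status S _ hp (l₂ := []) ?_
    rw [hedges]
  have hlen : (p'.concat h).length = p'.length + 1 := Walk.length_concat p' h
  have hlen' : p'.edges.length = p'.length := Walk.length_edges p'
  have halt' : S.IsAltPath p' := by
    constructor
    · have hnd := (Walk.isPath_def _).mp hp.1
      rw [Walk.support_concat, List.nodup_append] at hnd
      exact (Walk.isPath_def _).mpr hnd.1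
    · have hc := hp.2
      rw [hedges, List.Chain', List.isChain_append] at hc
      exact hc.1
  refine ⟨by simp, ?_, w, h, p', rfl, rfl, halt', hlen⟩
  rw [hstat, hlen, hlen', Nat.odd_iff, Nat.even_iff]
  omega

private lemma isAltPath_concat (S : Sys V) {u w : V} (p : S.G.Walk S.f u) (hp : S.IsAltPath p)
    (h : S.G.Adj u w) (hw : w ∉ p.support)
    (hstat : s(u, w) ∈ S.M ↔ Odd p.length) :
    S.IsAltPath (p.concat h) := by
  constructor
  · rw [Walk.isPath_def, Walk.support_concat, List.nodup_append']
    refine ⟨(Walk.isPath_def _).mp hp.1, List.nodup_singleton _, ?_⟩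
    intro x hx hx'
    simp at hx'
    subst hx'
    exact hw hx
  · rw [Walk.edges_concat, List.concat_eq_append, List.Chain', List.isChain_append]
    refine ⟨hp.2, List.isChain_singleton _, ?_⟩
    intro x hx y hy
    simp only [List.head?_cons, Option.mem_def, Option.some.injEq] at hy
    subst hy
    have hxstat := (last_edge_status S p hp hx).2.1
    have hEO := (Nat.not_odd_iff_even (n := p.length)).symm
    tauto

private lemma no_short_path_to_pred (S : Sys V) {t u' : V} {LαN : ℕ}
    (hLα : S.distOrth t = (LαN : ℕ∞)) (hadj : S.G.Adj u' t)
    (p : S.G.Walk S.f u') (hp : S.IsAltPath p)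
    (hstat : s(u', t) ∈ S.M ↔ Odd p.length) (hshort : p.length + 1 < LαN) : False := by
  by_cases hmem : t ∈ p.support
  · have halt := isAltPath_takeUntil S p hp hmem
    have hle := Walk.length_takeUntil_le p hmem
    have hd := distOrth_le_length S _ halt
    rw [hLα] at hd
    have hd' : LαN ≤ (p.takeUntil t hmem).length := by exact_mod_cast hd
    omega
  · have halt := isAltPath_concat S p hp hadj hmem hstat
    have hd := distOrth_le_length S _ halt
    rw [hLα, Walk.length_concat] at hd
    have hd' : LαN ≤ p.length + 1 := by exact_mod_cast hd
    omega

end AuxStmt7b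

section AuxStmt7c

open SimpleGraph List

variable {V : Type*} [Fintype V] [DecidableEq V]

private lemma inSub_self' {S : Sys V} (T : ABT S) (t : V) : T.inSub t t := ⟨0, rfl⟩

private lemma inSub_par' {S : Sys V} (T : ABT S) {t z : V} (hz : T.inSub t z) (hzt : z ≠ t) :
    T.inSub t (T.par z) := by
  obtain ⟨n, hn⟩ := hz
  cases n with
  | zero => exact absurd hn hzt
  | succ m =>
    refine ⟨m, ?_⟩
    rw [← Function.iterate_succ_apply]
    exact hn

private lemma inSub_of_par' {S : Sys V} (T : ABT S) {t y : V} (h : T.inSub t (T.par y)) :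
    T.inSub t y := by
  obtain ⟨n, hn⟩ := h
  refine ⟨n + 1, ?_⟩
  rw [Function.iterate_succ_apply]
  exact hn

private lemma par_iterate_f {S : Sys V} (T : ABT S) : ∀ n : ℕ, T.par^[n] S.f = S.f := by
  intro n
  induction n with
  | zero => rfl
  | succ m ihm => rw [Function.iterate_succ_apply, T.par_f]; exact ihm

private lemma not_inSub_f' {S : Sys V} (T : ABT S) {t : V} (htf : t ≠ S.f) :
    ¬ T.inSub t S.f := by
  rintro ⟨n, hn⟩
  exact htf (by rw [← hn, par_iterate_f T n])

private lemma distOrth_par_succ_le {S : Sys V} (T : ABT S) {u : V} (hu : u ≠ S.f) :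
    S.distOrth (T.par u) + 1 ≤ S.distOrth u := by
  obtain ⟨p, hp, hlen, hlast⟩ := T.par_mem u hu
  obtain ⟨hue, hstat, w, h, p', hpe, hew, hp'alt, hplen⟩ := last_edge_status S p hp hlast
  have hw : w = T.par u := by
    rw [Sym2.eq_iff] at hew
    rcases hew with ⟨h1, _⟩ | ⟨h1, h2⟩
    · exact h1.symm
    · exact absurd h2.symm h.ne
  subst hw
  have hle := distOrth_le_length S p' hp'alt
  calc S.distOrth (T.par u) + 1 ≤ (p'.length : ℕ∞) + 1 := by
        exact add_le_add_left hle 1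
    _ = (p.length : ℕ∞) := by rw [hplen]; push_cast; ring
    _ = S.distOrth u := hlen

private lemma inSub_distOrth_le {S : Sys V} (T : ABT S) {t : V} (htf : t ≠ S.f) :
    ∀ (n : ℕ) (v : V), T.par^[n] v = t → S.distOrth t + n ≤ S.distOrth v := by
  intro n
  induction n with
  | zero => intro v hv; simp [← hv]
  | succ m ih =>
    intro v hv
    by_cases hvf : v = S.f
    · subst hvf
      exact absurd ⟨m + 1, hv⟩ (not_inSub_f' T htf)
    · have h1 := ih (T.par v) (by rw [← Function.iterate_succ_apply]; exact hv)
      have h2 := distOrth_par_succ_le T hvf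
      calc S.distOrth t + (m + 1 : ℕ) = (S.distOrth t + m) + 1 := by push_cast; ring
        _ ≤ S.distOrth (T.par v) + 1 := add_le_add_left h1 1
        _ ≤ S.distOrth v := h2

private lemma inSub_distOrth_lt {S : Sys V} (T : ABT S) {t z : V} (htf : t ≠ S.f)
    (hz : T.inSub t z) (hzt : z ≠ t) : S.distOrth t + 1 ≤ S.distOrth z := by
  obtain ⟨n, hn⟩ := hz
  cases n with
  | zero => exact absurd hn hzt
  | succ m =>
    have := inSub_distOrth_le T htf (m + 1) z hn
    refine le_trans ?_ this
    have : (1 : ℕ∞) ≤ ((m + 1 : ℕ) : ℕ∞) := by exact_mod_cast Nat.succ_le_succ (Nat.zero_le m)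
    exact add_le_add_right this _

private lemma walk_split {G : SimpleGraph V} (Pred : V → Prop) :
    ∀ {a b : V} (p : G.Walk a b), Pred b → (∃ v ∈ p.support, ¬ Pred v) →
    ∃ (y z : V) (q : G.Walk a y) (hyz : G.Adj y z) (r : G.Walk z b),
      p = q.append (Walk.cons hyz r) ∧ ¬ Pred y ∧ ∀ v ∈ r.support, Pred v := by
  intro a b p
  induction p with
  | nil =>
    rintro hb ⟨v, hv, hnv⟩
    simp only [Walk.support_nil, List.mem_singleton] at hv
    subst hv
    exact absurd hb hnv
  | cons h q ih =>
    intro hb hex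
    by_cases hq : ∃ v ∈ q.support, ¬ Pred v
    · obtain ⟨y, z, q', hyz, r, heq, hy, hr⟩ := ih hb hq
      refine ⟨y, z, Walk.cons h q', hyz, r, ?_, hy, hr⟩
      rw [heq, Walk.cons_append]
    · push_neg at hq
      obtain ⟨v, hv, hnv⟩ := hex
      rw [Walk.support_cons, List.mem_cons] at hv
      rcases hv with rfl | hv
      · exact ⟨v, _, Walk.nil, h, q, by rw [Walk.nil_append], hnv, hq⟩
      · exact absurd (hq v hv) hnv

end AuxStmt7c

section AuxStmt7d

open SimpleGraph List

variable {V : Type*} [Fintype V] [DecidableEq V]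

private lemma EP_mem_status {S : Sys V} {t : V} {LαN : ℕ} (hLα : S.distOrth t = (LαN : ℕ∞))
    {e : Sym2 V} (he : e ∈ S.EP t) : t ∈ e ∧ (e ∈ S.M ↔ Even LαN) := by
  obtain ⟨p, hp, hplen, hplast⟩ := he
  have hpN : p.length = LαN := by
    rw [hLα] at hplen
    exact_mod_cast hplen
  have h := last_edge_status S p hp hplast
  exact ⟨h.1, by rw [← hpN]; exact h.2.1⟩

private lemma EPincoming_level_ge {S : Sys V} (T : ABT S) {t : V} {LαN LβN : ℕ}
    (hLα : S.distOrth t = (LαN : ℕ∞))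
    (hLβ : S.adist (!S.op t) t = (LβN : ℕ∞))
    (hparα : Odd LαN ↔ S.op t = true)
    (hLαpos : 1 ≤ LαN)
    {e' : Sym2 V} (hEP : e' ∈ S.EP t) (hinc : T.Incoming t e') :
    ((Fintype.card V + 1 : ℕ) : ℕ∞) * ((LαN + LβN : ℕ) : ℕ∞) + (LβN : ℕ∞) ≤ S.level e' := by
  obtain ⟨Lα', rfl⟩ : ∃ m, LαN = m + 1 := ⟨LαN - 1, by omega⟩
  obtain ⟨heG, hnt, y', z', he'eq, hz', hy'⟩ := hinc
  have hts := EP_mem_status hLα hEP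
  have htz : t = z' := by
    rcases Sym2.mem_iff.mp (he'eq ▸ hts.1) with h1 | h1
    · exact absurd (h1 ▸ inSub_self' T t) hy'
    · exact h1
  subst htz
  have hadj : S.G.Adj y' t := by
    have hG2 : s(y', t) ∈ S.G.edgeSet := he'eq ▸ heG
    exact hG2
  have hstatus : e' ∈ S.M ↔ Even (Lα' + 1) := hts.2
  have hρ : S.rho e' = !S.op t := by
    have h1 : (S.rho e' = true) ↔ e' ∈ S.M := rho_eq_true S e'
    have h2 : e' ∈ S.M ↔ ¬ (S.op t = true) := by
      rw [hstatus, Nat.even_iff]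
      rw [Nat.odd_iff] at hparα
      have hmod : (Lα' + 1) % 2 = 0 ↔ ¬ ((Lα' + 1) % 2 = 1) := by omega
      tauto
    cases hb2 : S.op t
    · have hm : e' ∈ S.M := by
        apply hstatus.mpr
        apply Nat.not_odd_iff_even.mp
        intro hodd
        rw [hb2] at hparα
        exact absurd (hparα.mp hodd) (by simp)
      simp [Sys.rho, hm]
    · have hm : e' ∉ S.M := by
        intro hm
        have he := hstatus.mp hm
        rw [hb2] at hparα
        exact (Nat.not_odd_iff_even.mpr he) (hparα.mpr rfl)
      simp [Sys.rho, hm]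
  have hlow : ((Lα' : ℕ) : ℕ∞) ≤ S.adist (!S.op t) y' := by
    by_contra hcon
    push_neg at hcon
    have hne : S.adist (!S.op t) y' ≠ ⊤ := by
      intro h0
      rw [h0] at hcon
      exact absurd hcon (by simp)
    obtain ⟨R, hRalt, hRlen, hRpar⟩ := adist_realize S hne
    have hRN : (R.length : ℕ∞) < ((Lα' : ℕ) : ℕ∞) := by rw [hRlen]; exact hcon
    have hRN' : R.length < Lα' := by exact_mod_cast hRN
    have hstat' : s(y', t) ∈ S.M ↔ Odd R.length := by
      have hO : Odd R.length ↔ Even (Lα' + 1) := by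
        cases hb2 : S.op t
        · simp [hb2] at hRpar hparα
          exact iff_of_true hRpar hparα
        · simp [hb2] at hRpar hparα
          exact iff_of_false (Nat.not_odd_iff_even.mpr hRpar) (Nat.not_even_iff_odd.mpr hparα)
      rw [← he'eq, hstatus]
      exact hO.symm
    exact no_short_path_to_pred S hLα hadj R hRalt hstat' (by omega)
  have hvE : S.vlevel e' = S.adist (S.rho e') y' + S.adist (S.rho e') t + 1 := by
    rw [he'eq]
    rfl
  have hhE : S.hlevel e' = max (S.adist (S.rho e') y') (S.adist (S.rho e') t) := by
    rw [he'eq]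
    rfl
  have hv : (((Lα' + 1) + LβN : ℕ) : ℕ∞) ≤ S.vlevel e' := by
    rw [hvE, hρ, hLβ]
    have heq : (((Lα' + 1) + LβN : ℕ) : ℕ∞) = ((Lα' : ℕ) : ℕ∞) + ((LβN : ℕ) : ℕ∞) + 1 := by
      push_cast
      ring
    rw [heq]
    exact add_le_add (add_le_add hlow (le_refl _)) (le_refl 1)
  have hh : ((LβN : ℕ) : ℕ∞) ≤ S.hlevel e' := by
    rw [hhE, hρ, hLβ]
    exact le_max_right _ _
  rw [Sys.level]
  exact add_le_add (mul_le_mul_right hv _) hh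

private lemma finish_stmt7 {S : Sys V} (T : ABT S) (t : V) (e0 : Sym2 V)
    (hinc : T.Incoming t e0) (hnotEP : e0 ∉ S.EP t)
    (hbound : ∀ e', T.Incoming t e' → e' ∈ S.EP t → S.level e0 ≤ S.level e') :
    ∃ estar : Sym2 V, T.IsMIE t estar ∧ estar ∉ S.EP t := by
  obtain ⟨em, hem, hmin⟩ :=
    Set.exists_min_image {e | T.Incoming t e} S.level (Set.toFinite _) ⟨e0, hinc⟩
  by_cases hEP : em ∈ S.EP t
  · exact ⟨e0, ⟨hinc, fun e' he' => le_trans (hbound em hem hEP) (hmin e' he')⟩, hnotEP⟩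
  · exact ⟨em, ⟨hem, fun e' he' => hmin e' he'⟩, hEP⟩

end AuxStmt7d

set_option maxHeartbeats 2000000 in
/-- For a vertex `t` of an alternating base tree `T` with `dist^β(t) < ∞`,
there exists a minimum-level incoming edge `e*` of `T(t)` with `e* ∉ EP(t)`. -/
theorem stmt7 (S : Sys V) (T : ABT S) (t : V) (ht : S.distUnorth t < ⊤) :
    ∃ estar : Sym2 V, T.IsMIE t estar ∧ estar ∉ S.EP t := by
  classical
  have hβne : S.distUnorth t ≠ ⊤ := ht.ne
  have hαβ : S.distOrth t ≤ S.distUnorth t := distOrth_le_adist S t (!S.op t)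
  have hαne : S.distOrth t ≠ ⊤ := fun hh => hβne (top_le_iff.mp (hh ▸ hαβ))
  obtain ⟨LβN, hLβ⟩ : ∃ n : ℕ, S.distUnorth t = (n : ℕ∞) := by
    obtain ⟨n, hn⟩ := WithTop.ne_top_iff_exists.mp hβne
    exact ⟨n, hn.symm⟩
  obtain ⟨LαN, hLα⟩ : ∃ n : ℕ, S.distOrth t = (n : ℕ∞) := by
    obtain ⟨n, hn⟩ := WithTop.ne_top_iff_exists.mp hαne
    exact ⟨n, hn.symm⟩
  have hLβ2 : S.adist (!S.op t) t = (LβN : ℕ∞) := hLβ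
  have hLα2 : S.adist (S.op t) t = (LαN : ℕ∞) := hLα
  have hQne : S.adist (!S.op t) t ≠ ⊤ := by rw [hLβ2]; simp
  have hPne : S.adist (S.op t) t ≠ ⊤ := by rw [hLα2]; simp
  obtain ⟨Q, hQalt, hQlen, hQpar⟩ := adist_realize S (u := t) (b := !S.op t) hQne
  obtain ⟨P₀, hP₀alt, hP₀len, hP₀par⟩ := adist_realize S (u := t) (b := S.op t) hPne
  have hQlenN : Q.length = LβN := by
    rw [hLβ2] at hQlen
    exact_mod_cast hQlen
  have hP₀N : P₀.length = LαN := by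
    rw [hLα2] at hP₀len
    exact_mod_cast hP₀len
  have hparα : Odd LαN ↔ S.op t = true := by rw [← hP₀N]; exact hP₀par
  have hparβ : Odd LβN ↔ (!S.op t) = true := by rw [← hQlenN]; exact hQpar
  have hparαβ : (LαN % 2 = 1) ↔ ¬ (LβN % 2 = 1) := by
    rw [Nat.odd_iff] at hparα hparβ
    cases hb : S.op t
    · simp [hb] at hparα hparβ
      omega
    · simp [hb] at hparα hparβ
      omega
  have htf : t ≠ S.f := by
    intro h
    subst h
    have hq0 : LβN = 0 := by
      have hnil := (Walk.isPath_iff_eq_nil (p := Q)).mp hQalt.1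
      rw [← hQlenN, hnil]
      rfl
    have hp0 : LαN = 0 := by
      have hnil := (Walk.isPath_iff_eq_nil (p := P₀)).mp hP₀alt.1
      rw [← hP₀N, hnil]
      rfl
    rw [hq0, hp0] at hparαβ
    omega
  have hLαpos : 1 ≤ LαN := by
    rcases Nat.eq_zero_or_pos LαN with h0 | h
    · exact absurd (walk_endpoints_eq_of_length_zero P₀ (by omega)).symm htf
    · exact h
  have hαleβ : LαN ≤ LβN := by
    rw [hLα, hLβ] at hαβ
    exact_mod_cast hαβ
  have hαltβ : LαN < LβN := by omega
  obtain ⟨y, z, q, hyz, r, hQeq, hy, hr⟩ :=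
    walk_split (T.inSub t) Q (inSub_self' T t)
      ⟨S.f, Q.start_mem_support, not_inSub_f' T htf⟩
  have hz : T.inSub t z := hr z r.start_mem_support
  have hQedges : Q.edges = q.edges ++ (s(y, z) :: r.edges) := by
    rw [hQeq, Walk.edges_append, Walk.edges_cons]
  have hlen_sum : LβN = q.length + 1 + r.length := by
    rw [← hQlenN, hQeq, Walk.length_append, Walk.length_cons]
    omega
  have he0stat : s(y, z) ∈ S.M ↔ Odd q.length := by
    have h := edge_status S Q hQalt hQedges
    rw [Walk.length_edges] at h
    exact h
  have hQnodup : Q.support.Nodup := (Walk.isPath_def Q).mp hQalt.1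
  have hQsup : Q.support = q.support ++ r.support := by
    rw [hQeq, Walk.support_append, Walk.support_cons, List.tail_cons]
  rw [hQsup, List.nodup_append'] at hQnodup
  obtain ⟨hqnd, hrnd, hqr⟩ := hQnodup
  have hqpath : q.IsPath := (Walk.isPath_def q).mpr hqnd
  have hrpath : r.IsPath := (Walk.isPath_def r).mpr hrnd
  have hchainQ := hQalt.2
  rw [hQedges, List.Chain', List.isChain_append] at hchainQ
  obtain ⟨hchq, hchr, hjunc⟩ := hchainQ
  have hqalt : S.IsAltPath q := ⟨hqpath, hchq⟩
  have hralt_chain := (List.isChain_cons.mp hchr).2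
  have hznq : z ∉ q.support := fun hzq => hqr hzq r.start_mem_support
  have hqe : S.IsAltPath (q.concat hyz) := isAltPath_concat S q hqalt hyz hznq he0stat
  have hdz_ub : S.distOrth z ≤ ((q.length + 1 : ℕ) : ℕ∞) := by
    have h := distOrth_le_length S _ hqe
    rw [Walk.length_concat] at h
    exact_mod_cast h
  by_cases hzt : z = t
  · -- the crossing edge arrives directly at t; it is the last edge of Q
    subst hzt
    have hrnil : r = Walk.nil := (Walk.isPath_iff_eq_nil (p := r)).mp hrpath
    have hc0 : r.length = 0 := by rw [hrnil]; rfl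
    have hq1 : q.length + 1 = LβN := by omega
    have hnotEP : s(y, z) ∉ S.EP z := by
      intro hEPe
      have hst := (EP_mem_status hLα hEPe).2
      have h1 : Odd q.length ↔ Even LαN := Iff.trans he0stat.symm hst
      rw [Nat.odd_iff, Nat.even_iff] at h1
      omega
    have hnotTree : ¬ T.IsTreeEdge s(y, z) := by
      rintro ⟨u, huf, hue⟩
      rw [Sym2.eq_iff] at hue
      rcases hue with ⟨h1, h2⟩ | ⟨h1, h2⟩
      · apply hy
        refine ⟨1, ?_⟩
        simp only [Function.iterate_one]
        rw [h1]
        exact h2.symm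
      · apply hnotEP
        rw [h1, ← h2]
        have hp := T.par_mem u (h2 ▸ htf)
        simp only [Sys.Pset, Set.mem_setOf_eq] at hp
        rw [← h2] at hp
        exact hp
    have hincoming : T.Incoming z s(y, z) :=
      ⟨(S.G.mem_edgeSet).mpr hyz, hnotTree, y, z, rfl, inSub_self' T z, hy⟩
    have hρ0 : S.rho s(y, z) = S.op z := by
      have h1 : (S.rho s(y, z) = true) ↔ s(y, z) ∈ S.M := rho_eq_true S _
      rw [Nat.odd_iff] at he0stat hparα
      rw [Nat.odd_iff] at hparβ
      cases hb : S.op z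
      · have hm : s(y, z) ∉ S.M := by
          intro hm
          have := he0stat.mp hm
          simp [hb] at hparα hparβ
          omega
        simp [Sys.rho, hm]
      · have hm : s(y, z) ∈ S.M := by
          apply he0stat.mpr
          simp [hb] at hparα hparβ
          omega
        simp [Sys.rho, hm]
    have hbound : ∀ e', T.Incoming z e' → e' ∈ S.EP z → S.level s(y, z) ≤ S.level e' := by
      intro e' hin' hEP'
      have hge := EPincoming_level_ge T hLα hLβ2 hparα hLαpos hEP' hin'
      have hay : S.adist (S.op z) y ≤ ((q.length : ℕ) : ℕ∞) := by
        apply adist_le S _ q hqalt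
        rw [← hρ0, rho_eq_true]
        exact he0stat.symm
      have hvE : S.vlevel s(y, z) =
          S.adist (S.rho s(y, z)) y + S.adist (S.rho s(y, z)) z + 1 := rfl
      have hhE : S.hlevel s(y, z) =
          max (S.adist (S.rho s(y, z)) y) (S.adist (S.rho s(y, z)) z) := rfl
      have hv0 : S.vlevel s(y, z) ≤ ((LαN + LβN : ℕ) : ℕ∞) := by
        rw [hvE, hρ0]
        calc S.adist (S.op z) y + S.adist (S.op z) z + 1
            ≤ ((q.length : ℕ) : ℕ∞) + ((LαN : ℕ) : ℕ∞) + 1 :=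
              add_le_add (add_le_add hay (le_of_eq hLα2)) le_rfl
          _ = ((LαN + LβN : ℕ) : ℕ∞) := by
              rw [← hq1]
              push_cast
              ring
      have hh0 : S.hlevel s(y, z) ≤ ((LβN : ℕ) : ℕ∞) := by
        rw [hhE, hρ0]
        apply max_le
        · exact le_trans hay (by exact_mod_cast (by omega : q.length ≤ LβN))
        · rw [hLα2]
          exact_mod_cast (by omega : LαN ≤ LβN)
      calc S.level s(y, z)
          = ((Fintype.card V + 1 : ℕ) : ℕ∞) * S.vlevel s(y, z) + S.hlevel s(y, z) := rfl
        _ ≤ ((Fintype.card V + 1 : ℕ) : ℕ∞) * ((LαN + LβN : ℕ) : ℕ∞) + ((LβN : ℕ) : ℕ∞) :=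
            add_le_add (mul_le_mul_right hv0 _) hh0
        _ ≤ S.level e' := hge
    exact finish_stmt7 T z s(y, z) hincoming hnotEP hbound
  · -- the crossing edge arrives at a proper subtree vertex
    have hc1 : 1 ≤ r.length := by
      rcases Nat.eq_zero_or_pos r.length with h0 | h
      · exact absurd (walk_endpoints_eq_of_length_zero r h0) hzt
      · exact h
    have hdz_lb : ((LαN : ℕ) : ℕ∞) + 1 ≤ S.distOrth z := by
      have h := inSub_distOrth_lt T htf hz hzt
      rw [hLα] at h
      exact h
    have hka : LαN ≤ q.length := by
      have h := le_trans hdz_lb hdz_ub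
      have h2 : ((LαN + 1 : ℕ) : ℕ∞) ≤ ((q.length + 1 : ℕ) : ℕ∞) := by
        push_cast
        push_cast at h
        exact h
      have h3 : LαN + 1 ≤ q.length + 1 := by exact_mod_cast h2
      omega
    have hnotTree : ¬ T.IsTreeEdge s(y, z) := by
      rintro ⟨u, huf, hue⟩
      rw [Sym2.eq_iff] at hue
      rcases hue with ⟨h1, h2⟩ | ⟨h1, h2⟩
      · apply hy
        apply inSub_of_par' T
        rw [h1, ← h2]
        exact hz
      · apply hy
        have := inSub_par' T hz hzt
        rw [← h2] at h1
        rw [h1]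
        exact this
    have hnotEP : s(y, z) ∉ S.EP t := by
      intro hEPe
      have hte := (EP_mem_status hLα hEPe).1
      rcases Sym2.mem_iff.mp hte with h1 | h1
      · exact hy (h1 ▸ inSub_self' T t)
      · exact hzt h1.symm
    have hincoming : T.Incoming t s(y, z) :=
      ⟨(S.G.mem_edgeSet).mpr hyz, hnotTree, y, z, rfl, hz, hy⟩
    have hbound : ∀ e', T.Incoming t e' → e' ∈ S.EP t → S.level s(y, z) ≤ S.level e' := by
      intro e' hin' hEP'
      have hge := EPincoming_level_ge T hLα hLβ2 hparα hLαpos hEP' hin'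
      obtain ⟨Pw, hPalt, hPlen, hPlast⟩ := hEP'
      have hPN : Pw.length = LαN := by
        rw [hLα] at hPlen
        exact_mod_cast hPlen
      have hPavoid : ∀ v ∈ Pw.support, T.inSub t v → v = t := by
        intro v hv hvin
        by_contra hvt
        have h1 := inSub_distOrth_lt T htf hvin hvt
        have h2 := distOrth_le_length S _ (isAltPath_takeUntil S Pw hPalt hv)
        have h3 := Walk.length_takeUntil_le Pw hv
        rw [hLα] at h1
        have h4 : ((LαN : ℕ) : ℕ∞) + 1 ≤ (((Pw.takeUntil v hv).length : ℕ) : ℕ∞) :=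
          le_trans h1 h2
        have h5 : LαN + 1 ≤ (Pw.takeUntil v hv).length := by exact_mod_cast h4
        omega
      have hrne : r.edges ≠ [] := by
        intro h0
        have : r.edges.length = 0 := by rw [h0]; rfl
        rw [Walk.length_edges] at this
        omega
      obtain ⟨er, her⟩ : ∃ er, r.edges.getLast? = some er := by
        cases h0 : r.edges.getLast? with
        | none => exact absurd (List.getLast?_eq_none_iff.mp h0) hrne
        | some e => exact ⟨e, rfl⟩
      have hQlast : Q.edges.getLast? = some er := by
        rw [hQedges, show s(y, z) :: r.edges = [s(y, z)] ++ r.edges from rfl,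
          ← List.append_assoc, List.getLast?_append_of_ne_nil _ hrne]
        exact her
      have herstat : er ∈ S.M ↔ Even LβN := by
        have h := (last_edge_status S Q hQalt hQlast).2.1
        rw [hQlenN] at h
        exact h
      have he'stat : e' ∈ S.M ↔ Even LαN := (EP_mem_status hLα ⟨Pw, hPalt, hPlen, hPlast⟩).2
      have hWlen : (Pw.append r.reverse).length = LαN + r.length := by
        rw [Walk.length_append, Walk.length_reverse, hPN]
      have hrrev_nd : (r.reverse.support).Nodup := by
        rw [Walk.support_reverse, List.nodup_reverse]
        exact hrnd
      have hWpath : (Pw.append r.reverse).IsPath := by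
        rw [Walk.isPath_def, Walk.support_append, List.nodup_append']
        refine ⟨(Walk.isPath_def _).mp hPalt.1, ?_, ?_⟩
        · have h2 := hrrev_nd
          rw [Walk.support_eq_cons r.reverse] at h2
          exact (List.nodup_cons.mp h2).2
        · intro v hv hv2
          have hvr : v ∈ r.support := by
            have h3 := List.tail_subset _ hv2
            rw [Walk.support_reverse, List.mem_reverse] at h3
            exact h3
          have hvt : v = t := hPavoid v hv (hr v hvr)
          have h2 := hrrev_nd
          rw [Walk.support_eq_cons r.reverse] at h2
          exact (List.nodup_cons.mp h2).1 (hvt ▸ hv2)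
      have hWchain : List.Chain' (fun e₁ e₂ => (e₁ ∈ S.M ↔ e₂ ∉ S.M))
          (Pw.append r.reverse).edges := by
        rw [Walk.edges_append, Walk.edges_reverse, List.Chain', List.isChain_append]
        refine ⟨hPalt.2, ?_, ?_⟩
        · rw [List.isChain_reverse]
          refine List.IsChain.imp ?_ hralt_chain
          intro e₁ e₂ h
          constructor
          · intro h2 h1
            exact h.mp h1 h2
          · intro h1
            by_contra h2
            exact h1 (h.mpr h2)
        · intro x hx yy hyy
          rw [List.head?_reverse] at hyy
          rw [hPlast] at hx
          rw [her] at hyy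
          simp only [Option.mem_def, Option.some.injEq] at hx hyy
          subst hx
          subst hyy
          rw [he'stat, herstat, Nat.even_iff, Nat.even_iff]
          omega
      have hWalt : S.IsAltPath (Pw.append r.reverse) := ⟨hWpath, hWchain⟩
      have hρ0par : Odd (Pw.append r.reverse).length ↔ S.rho s(y, z) = true := by
        rw [hWlen, rho_eq_true S _, he0stat, Nat.odd_iff, Nat.odd_iff]
        omega
      have haz : S.adist (S.rho s(y, z)) z ≤ ((LαN + r.length : ℕ) : ℕ∞) := by
        have h := adist_le S (S.rho s(y, z)) (Pw.append r.reverse) hWalt hρ0par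
        rw [hWlen] at h
        exact_mod_cast h
      have hay : S.adist (S.rho s(y, z)) y ≤ ((q.length : ℕ) : ℕ∞) := by
        apply adist_le S _ q hqalt
        rw [rho_eq_true]
        exact he0stat.symm
      have hvE : S.vlevel s(y, z) =
          S.adist (S.rho s(y, z)) y + S.adist (S.rho s(y, z)) z + 1 := rfl
      have hhE : S.hlevel s(y, z) =
          max (S.adist (S.rho s(y, z)) y) (S.adist (S.rho s(y, z)) z) := rfl
      have hv0 : S.vlevel s(y, z) ≤ ((LαN + LβN : ℕ) : ℕ∞) := by
        rw [hvE]
        calc S.adist (S.rho s(y, z)) y + S.adist (S.rho s(y, z)) z + 1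
            ≤ ((q.length : ℕ) : ℕ∞) + ((LαN + r.length : ℕ) : ℕ∞) + 1 :=
              add_le_add (add_le_add hay haz) le_rfl
          _ = ((LαN + LβN : ℕ) : ℕ∞) := by
              rw [hlen_sum]
              push_cast
              ring
      have hh0 : S.hlevel s(y, z) ≤ ((LβN : ℕ) : ℕ∞) := by
        rw [hhE]
        apply max_le
        · exact le_trans hay (by exact_mod_cast (by omega : q.length ≤ LβN))
        · exact le_trans haz (by exact_mod_cast (by omega : LαN + r.length ≤ LβN))
      calc S.level s(y, z)
          = ((Fintype.card V + 1 : ℕ) : ℕ∞) * S.vlevel s(y, z) + S.hlevel s(y, z) := rfl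
        _ ≤ ((Fintype.card V + 1 : ℕ) : ℕ∞) * ((LαN + LβN : ℕ) : ℕ∞) + ((LβN : ℕ) : ℕ∞) :=
            add_le_add (mul_le_mul_right hv0 _) hh0
        _ ≤ S.level e' := hge
    exact finish_stmt7 T t s(y, z) hincoming hnotEP hbound
end

section
/- Any shortest augmenting path X of a matching system (G,M) contains no edge of volume larger than 2ℓ+5 and contains no vertex v with dist^α(v) > ℓ+2, where 2ℓ+1 is the length of shortest augmenting paths. -/
open SimpleGraph
open scoped Classical

variable {V : Type*} [Fintype V] [DecidableEq V]

namespace Sys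
variable (S : Sys V)

lemma distOrth_le_adist (θ : Bool) (v : V) : S.distOrth v ≤ S.adist θ v := by
  unfold distOrth op
  by_cases h : S.adist true v < S.adist false v
  · simp only [if_pos h]; cases θ
    · exact le_of_lt h
    · exact le_rfl
  · simp only [if_neg h]; cases θ
    · exact le_rfl
    · exact not_lt.mp h

lemma adist_le_length {v : V} (W : S.G.Walk S.f v) (hW : S.IsAltPath W) :
    S.adist (decide (Odd W.length)) v ≤ (W.length : ℕ∞) :=
  sInf_le ⟨W, hW, rfl, by simp⟩

lemma f_ne_of_mem_U {u : V} (hu : u ∈ S.U) : S.f ≠ u := by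
  obtain ⟨-, -, -, hm⟩ := S.U_spec u hu
  intro h
  exact S.f_free _ hm (h ▸ Sym2.mem_mk_right _ _)

lemma adist_le_aux {a v : V} (ha : a ∈ S.U)
    (p : S.G.Walk a v) (hp : p.IsPath)
    (hf : S.f ∉ p.support) (hm : S.mid a ∉ p.support)
    (hchain : p.edges.Chain' (fun e₁ e₂ => (e₁ ∈ S.M ↔ e₂ ∉ S.M)))
    (hhead : ∀ e ∈ p.edges.head?, e ∉ S.M) :
    S.adist (decide (Odd p.length)) v ≤ ((p.length + 2 : ℕ) : ℕ∞) := by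
  obtain ⟨h1, hn1, h2, hm2⟩ := S.U_spec a ha
  set W : S.G.Walk S.f v := Walk.cons h1 (Walk.cons h2 p) with hWdef
  have hlen : W.length = p.length + 2 := by simp [hWdef]
  have hWalt : S.IsAltPath W := by
    constructor
    · rw [hWdef, Walk.cons_isPath_iff, Walk.cons_isPath_iff]
      refine ⟨⟨hp, hm⟩, ?_⟩
      rw [Walk.support_cons, List.mem_cons]
      push_neg
      exact ⟨h1.ne, hf⟩
    · show List.Chain' _ W.edges
      rw [hWdef]
      simp only [Walk.edges_cons, List.Chain']
      rw [List.isChain_cons, List.isChain_cons]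
      refine ⟨?_, ?_, hchain⟩
      · intro e he
        simp only [List.head?_cons, Option.mem_def, Option.some.injEq] at he
        subst he
        constructor
        · intro h; exact absurd h hn1
        · intro h; exact absurd hm2 h
      · intro e he
        have := hhead e he
        tauto
  have hres := S.adist_le_length W hWalt
  rw [hlen] at hres
  have hpar : (decide (Odd (p.length + 2))) = decide (Odd p.length) := by
    simp [Nat.odd_add]
  rwa [hpar] at hres

lemma adist_le_aux' {b v : V} (hb : b ∈ S.U)
    (q : S.G.Walk v b) (hq : q.IsPath)
    (hf : S.f ∉ q.support) (hm : S.mid b ∉ q.support)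
    (hchain : q.edges.Chain' (fun e₁ e₂ => (e₁ ∈ S.M ↔ e₂ ∉ S.M)))
    (hlast : ∀ e ∈ q.edges.getLast?, e ∉ S.M) :
    S.adist (decide (Odd q.length)) v ≤ ((q.length + 2 : ℕ) : ℕ∞) := by
  have hres := S.adist_le_aux hb q.reverse hq.reverse
    (by simpa using hf) (by simpa using hm) ?_ ?_
  · simpa using hres
  · simp only [Walk.edges_reverse, List.Chain', List.isChain_reverse]
    exact List.IsChain.imp (fun a b h => by tauto) hchain
  · rw [Walk.edges_reverse, List.head?_reverse]
    exact hlast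

end Sys

namespace Sys
variable (S : Sys V)

lemma chain_parity {l : List (Sym2 V)}
    (hc : l.Chain' (fun e₁ e₂ => (e₁ ∈ S.M ↔ e₂ ∉ S.M)))
    (h0 : ∀ e ∈ l.head?, e ∉ S.M) :
    ∀ i (hi : i < l.length), (l[i] ∈ S.M ↔ Odd i) := by
  intro i
  induction i with
  | zero =>
    intro hi
    match l, hi with
    | e :: t, _ =>
      simp only [List.getElem_cons_zero, Nat.odd_iff]
      have := h0 e (by simp)
      simp [this]
  | succ n ih =>
    intro hi
    have hn : n < l.length - 1 := by omega
    have hR := List.isChain_iff_getElem.mp hc n (by omega)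
    have hI := ih (by omega)
    rw [Nat.odd_add_one]
    tauto

lemma aug_f_not_mem {a b : V} (X : S.G.Walk a b) (hX : S.IsAugPath X) :
    S.f ∉ X.support := by
  intro hf
  have ha := hX.2.1
  have hb := hX.2.2.1
  have hfa : S.f ≠ a := S.f_ne_of_mem_U ha
  have hfb : S.f ≠ b := S.f_ne_of_mem_U hb
  obtain ⟨w, hw, q', hq'⟩ := Walk.exists_eq_cons_of_ne hfb (X.dropUntil S.f hf)
  obtain ⟨w', hw', p'', hp''⟩ :=
    Walk.exists_eq_cons_of_ne hfa (X.takeUntil S.f hf).reverse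
  have hedges : X.edges = (X.takeUntil S.f hf).edges ++ (X.dropUntil S.f hf).edges := by
    conv_lhs => rw [← X.take_spec hf]
    rw [Walk.edges_append]
  have hchain := hX.1.2
  rw [hedges] at hchain
  simp only [List.Chain', List.isChain_append] at hchain
  have hlastp : (X.takeUntil S.f hf).edges.getLast? = some s(S.f, w') := by
    rw [← List.head?_reverse, ← Walk.edges_reverse, hp'']
    simp
  have hheadq : (X.dropUntil S.f hf).edges.head? = some s(S.f, w) := by
    rw [hq']; simp
  have hR := hchain.2.2 _ hlastp _ hheadq
  by_cases hM : s(S.f, w') ∈ S.M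
  · exact S.f_free _ hM (Sym2.mem_mk_left _ _)
  · have : s(S.f, w) ∈ S.M := by tauto
    exact S.f_free _ this (Sym2.mem_mk_left _ _)

lemma aug_mid_a_not_mem {a b : V} (X : S.G.Walk a b) (hX : S.IsAugPath X)
    (hf : S.f ∉ X.support) : S.mid a ∉ X.support := by
  intro hm
  have ha := hX.2.1
  obtain ⟨h1, hn1, h2, hm2⟩ := S.U_spec a ha
  have hpp : (X.takeUntil (S.mid a) hm).IsPath := hX.1.1.takeUntil hm
  obtain ⟨w, hw, r, hr⟩ := Walk.exists_eq_cons_of_ne h2.ne (X.takeUntil (S.mid a) hm).reverse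
  rcases S.mid_deg a ha w hw with hwf | rfl
  · apply hf
    apply Walk.support_takeUntil_subset X hm
    have hws : w ∈ (X.takeUntil (S.mid a) hm).reverse.support := by
      rw [hr, Walk.support_cons]
      exact List.mem_cons_of_mem _ r.start_mem_support
    rw [Walk.support_reverse, List.mem_reverse] at hws
    exact hwf ▸ hws
  · have hrnil : r = Walk.nil := by
      have : (Walk.cons hw r).IsPath := hr ▸ hpp.reverse
      exact (Walk.isPath_iff_eq_nil).mp this.of_cons
    have hpe : (X.takeUntil (S.mid w) hm).edges = [s(w, S.mid w)] := by
      have h1' : (X.takeUntil (S.mid w) hm).reverse.edges = [s(S.mid w, w)] := by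
        rw [hr, hrnil]; simp
      rw [Walk.edges_reverse] at h1'
      have := congrArg List.reverse h1'
      simpa [Sym2.eq_swap] using this
    have hhead : X.edges.head? = some s(w, S.mid w) := by
      conv_lhs => rw [← X.take_spec hm]
      rw [Walk.edges_append, hpe]
      rfl
    exact hX.2.2.2.2.1 _ hhead (by rwa [Sym2.eq_swap])

lemma aug_mid_b_not_mem {a b : V} (X : S.G.Walk a b) (hX : S.IsAugPath X)
    (hf : S.f ∉ X.support) : S.mid b ∉ X.support := by
  intro hm
  have hb := hX.2.2.1
  obtain ⟨h1, hn1, h2, hm2⟩ := S.U_spec b hb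
  have hqp : (X.dropUntil (S.mid b) hm).IsPath := hX.1.1.dropUntil hm
  obtain ⟨w, hw, r, hr⟩ := Walk.exists_eq_cons_of_ne h2.ne (X.dropUntil (S.mid b) hm)
  rcases S.mid_deg b hb w hw with hwf | rfl
  · apply hf
    apply Walk.support_dropUntil_subset X hm
    rw [hr, Walk.support_cons]
    exact List.mem_cons_of_mem _ (hwf ▸ r.start_mem_support)
  · have hrnil : r = Walk.nil := by
      have : (Walk.cons hw r).IsPath := hr ▸ hqp
      exact (Walk.isPath_iff_eq_nil).mp this.of_cons
    have hqe : (X.dropUntil (S.mid w) hm).edges = [s(S.mid w, w)] := by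
      rw [hr, hrnil]; simp
    have hlast : X.edges.getLast? = some s(S.mid w, w) := by
      conv_lhs => rw [← X.take_spec hm]
      rw [Walk.edges_append, hqe, List.getLast?_append]
      rfl
    exact hX.2.2.2.2.2 _ hlast hm2

end Sys

lemma walk_decomp {G : SimpleGraph V} {a b : V} (X : G.Walk a b) (e : Sym2 V)
    (he : e ∈ X.edges) :
    ∃ (y z : V) (h : G.Adj y z) (p : G.Walk a y) (q : G.Walk z b),
      X = p.append (SimpleGraph.Walk.cons h q) ∧ e = s(y, z) := by
  induction X with
  | nil => simp at he
  | @cons u c d h rest ih =>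
    rw [Walk.edges_cons, List.mem_cons] at he
    rcases he with he | he
    · exact ⟨u, c, h, Walk.nil, rest, by simp, he⟩
    · obtain ⟨y, z, h', p, q, hd, hee⟩ := ih he
      exact ⟨y, z, h', Walk.cons h p, q, by rw [Walk.cons_append, hd], hee⟩

/-- Any shortest augmenting path `X` (of length `2ℓ+1`) contains no edge of volume
larger than `2ℓ+5`, and no vertex `v` with `dist^α(v) > ℓ+2`. -/
theorem stmt12 (S : Sys V) (ℓ : ℕ) (hl : S.ShortestAugLen (2 * ℓ + 1))
    {a b : V} (X : S.G.Walk a b) (hX : S.IsAugPath X) (hlen : X.length = 2 * ℓ + 1) :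
    (∀ e ∈ X.edges, S.vlevel e ≤ ((2 * ℓ + 5 : ℕ) : ℕ∞)) ∧
    (∀ v ∈ X.support, S.distOrth v ≤ ((ℓ + 2 : ℕ) : ℕ∞)) := by
  have hfX : S.f ∉ X.support := S.aug_f_not_mem X hX
  have hmaX : S.mid a ∉ X.support := S.aug_mid_a_not_mem X hX hfX
  have hmbX : S.mid b ∉ X.support := S.aug_mid_b_not_mem X hX hfX
  have ha := hX.2.1
  have hb := hX.2.2.1
  constructor
  · intro e he
    obtain ⟨y, z, hadj, p, q, hd, rfl⟩ := walk_decomp X e he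
    have hedg : X.edges = p.edges ++ s(y, z) :: q.edges := by
      rw [hd, Walk.edges_append, Walk.edges_cons]
    have hsup : X.support = p.support ++ q.support := by
      rw [hd, Walk.support_append, Walk.support_cons, List.tail_cons]
    have hnd : (p.support ++ q.support).Nodup := by
      rw [← hsup]; exact (X.isPath_def).mp hX.1.1
    have hp : p.IsPath := p.isPath_def.mpr hnd.of_append_left
    have hq : q.IsPath := q.isPath_def.mpr hnd.of_append_right
    have hsubp : ∀ x ∈ p.support, x ∈ X.support := by
      intro x hx; rw [hsup]; exact List.mem_append_left _ hx
    have hsubq : ∀ x ∈ q.support, x ∈ X.support := by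
      intro x hx; rw [hsup]; exact List.mem_append_right _ hx
    have hchp := (hX.1.2).prefix ⟨_, hedg.symm⟩
    have hchq : q.edges.Chain' (fun e₁ e₂ => (e₁ ∈ S.M ↔ e₂ ∉ S.M)) :=
      (hX.1.2).suffix ⟨p.edges ++ [s(y, z)], by rw [hedg]; simp⟩
    have hheadp : ∀ e' ∈ p.edges.head?, e' ∉ S.M := by
      intro e' he'
      refine hX.2.2.2.2.1 e' ?_
      rw [hedg, List.head?_append, Option.mem_def.mp he']; rfl
    have hlastq : ∀ e' ∈ q.edges.getLast?, e' ∉ S.M := by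
      intro e' he'
      refine hX.2.2.2.2.2 e' ?_
      rw [hedg, List.getLast?_append,
        show s(y, z) :: q.edges = [s(y, z)] ++ q.edges from rfl,
        List.getLast?_append, Option.mem_def.mp he']
      rfl
    have hiy := S.adist_le_aux ha p hp (fun h => hfX (hsubp _ h))
      (fun h => hmaX (hsubp _ h)) hchp hheadp
    have hiz := S.adist_le_aux' hb q hq (fun h => hfX (hsubq _ h))
      (fun h => hmbX (hsubq _ h)) hchq hlastq
    have hsum : p.length + q.length = 2 * ℓ := by
      have : X.length = p.length + (q.length + 1) := by
        rw [hd, Walk.length_append, Walk.length_cons]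
      omega
    have hOdd : (s(y, z) ∈ S.M ↔ Odd p.length) := by
      have hch' : (p.edges ++ s(y, z) :: q.edges).Chain'
          (fun e₁ e₂ => (e₁ ∈ S.M ↔ e₂ ∉ S.M)) := by
        rw [← hedg]; exact hX.1.2
      have hh0 : ∀ e' ∈ (p.edges ++ s(y, z) :: q.edges).head?, e' ∉ S.M := by
        intro e' he'
        exact hX.2.2.2.2.1 e' (by rw [hedg]; exact Option.mem_def.mp he')
      have hi : p.edges.length < (p.edges ++ s(y, z) :: q.edges).length := by simp
      have hpar := S.chain_parity hch' hh0 p.edges.length hi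
      rw [List.getElem_append_right (le_refl _)] at hpar
      simpa [Walk.length_edges] using hpar
    have hrho : S.rho s(y, z) = decide (Odd p.length) := by
      unfold Sys.rho
      split_ifs with hM
      · simp [hOdd.mp hM]
      · simp [show ¬ Odd p.length from fun h => hM (hOdd.mpr h)]
    have hparq : (decide (Odd q.length)) = decide (Odd p.length) :=
      decide_eq_decide.mpr (by rw [Nat.odd_iff, Nat.odd_iff]; omega)
    rw [hparq] at hiz
    have hvl : S.vlevel s(y, z) =
        S.adist (S.rho s(y, z)) y + S.adist (S.rho s(y, z)) z + 1 := by
      unfold Sys.vlevel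
      rw [Sym2.lift_mk]
    rw [hvl, hrho]
    calc S.adist (decide (Odd p.length)) y + S.adist (decide (Odd p.length)) z + 1
        ≤ ((p.length + 2 : ℕ) : ℕ∞) + ((q.length + 2 : ℕ) : ℕ∞) + 1 :=
          add_le_add (add_le_add hiy hiz) le_rfl
      _ = (((p.length + 2) + (q.length + 2) + 1 : ℕ) : ℕ∞) := by push_cast; ring
      _ = ((2 * ℓ + 5 : ℕ) : ℕ∞) := congrArg _ (by omega)
  · intro v hv
    have hspec := X.take_spec hv
    have hedg : X.edges = (X.takeUntil v hv).edges ++ (X.dropUntil v hv).edges := by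
      rw [← Walk.edges_append, hspec]
    have hp : (X.takeUntil v hv).IsPath := hX.1.1.takeUntil hv
    have hq : (X.dropUntil v hv).IsPath := hX.1.1.dropUntil hv
    have hsum : (X.takeUntil v hv).length + (X.dropUntil v hv).length = 2 * ℓ + 1 := by
      have h2 := congrArg Walk.length hspec
      rw [Walk.length_append] at h2
      omega
    have hchp := (hX.1.2).prefix ⟨_, hedg.symm⟩
    have hchq := (hX.1.2).suffix ⟨_, hedg.symm⟩
    have hheadp : ∀ e' ∈ (X.takeUntil v hv).edges.head?, e' ∉ S.M := by
      intro e' he'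
      refine hX.2.2.2.2.1 e' ?_
      rw [hedg, List.head?_append, Option.mem_def.mp he']; rfl
    have hlastq : ∀ e' ∈ (X.dropUntil v hv).edges.getLast?, e' ∉ S.M := by
      intro e' he'
      refine hX.2.2.2.2.2 e' ?_
      rw [hedg, List.getLast?_append, Option.mem_def.mp he']; rfl
    have hiy := S.adist_le_aux ha _ hp (fun h => hfX (X.support_takeUntil_subset hv h))
      (fun h => hmaX (X.support_takeUntil_subset hv h)) hchp hheadp
    have hiz := S.adist_le_aux' hb _ hq (fun h => hfX (X.support_dropUntil_subset hv h))
      (fun h => hmbX (X.support_dropUntil_subset hv h)) hchq hlastq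
    rcases le_or_gt (X.takeUntil v hv).length ℓ with h | h
    · exact le_trans (S.distOrth_le_adist _ v) (le_trans hiy (Nat.cast_le.mpr (by omega)))
    · exact le_trans (S.distOrth_le_adist _ v) (le_trans hiz (Nat.cast_le.mpr (by omega)))
end
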